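/- arXiv:0904.3362 — 2 statements merged into one kernel-verified Lean document; each statement's English description precedes it below -/
import Mathlib

section
/- Let V be a finite-dimensional complex vector space and A an invertible linear endomorphism of V. The multiplicative Jordan–Chevalley decomposition of A is unique: if A = S ∘ U = U ∘ S with S semisimple and U unipotent, and also A = S' ∘ U' = U' ∘ S' with S' semisimple and U' unipotent, then S = S' and U = U'. -/
/-- An endomorphism `S` of a complex vector space is semisimple if every
`S`-invariant subspace has an `S`-invariant complement. -/
def IsSemisimpleEnd {V : Type*} [AddCommGroup V] [Module ℂ V]
    (S : Module.End ℂ V) : Prop :=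
  ∀ W : Submodule ℂ V, W.map S ≤ W →
    ∃ W' : Submodule ℂ V, W'.map S ≤ W' ∧ IsCompl W W'

lemma isSemisimpleEnd_iff {V : Type*} [AddCommGroup V] [Module ℂ V]
    (S : Module.End ℂ V) : IsSemisimpleEnd S ↔ S.IsSemisimple := by
  rw [Module.End.isSemisimple_iff]
  simp only [Module.End.mem_invtSubmodule, ← Submodule.map_le_iff_le_comap]
  constructor
  · intro h p hp
    obtain ⟨q, hq, hcompl⟩ := h p hp
    exact ⟨q, hq, hcompl⟩
  · intro h W hW
    obtain ⟨q, hq, hcompl⟩ := h W hW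
    exact ⟨q, hq, hcompl⟩

/-- Uniqueness of the additive Jordan–Chevalley decomposition. -/
lemma additive_unique {V : Type*} [AddCommGroup V] [Module ℂ V]
    [FiniteDimensional ℂ V] (A S N : Module.End ℂ V)
    (hSN : Commute S N) (hS : S.IsSemisimple) (hN : IsNilpotent N)
    (hA : A = S + N) :
    ∀ s ∈ Algebra.adjoin ℂ {A}, ∀ n ∈ Algebra.adjoin ℂ {A},
      s.IsSemisimple → IsNilpotent n → A = n + s → S = s := by
  intro s hs n hn hss hnn hdec
  have hSA : Commute S A := by
    rw [hA]; exact (Commute.refl S).add_right hSN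
  have hNA : Commute N A := by
    rw [hA]; exact (hSN.symm).add_right (Commute.refl N)
  have hSs : Commute S s := Algebra.commute_of_mem_adjoin_singleton_of_commute hs hSA
  have hSn : Commute S n := Algebra.commute_of_mem_adjoin_singleton_of_commute hn hSA
  have hNs : Commute N s := Algebra.commute_of_mem_adjoin_singleton_of_commute hs hNA
  have hNn : Commute N n := Algebra.commute_of_mem_adjoin_singleton_of_commute hn hNA
  have key : S - s = n - N := by
    have : S + N = n + s := by rw [← hA, hdec]
    linear_combination (norm := module) this
  have hsemi : (S - s).IsSemisimple := hS.sub_of_commute hSs hss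
  have hnil : IsNilpotent (S - s) := by
    rw [key, sub_eq_add_neg]
    exact (hNn.symm.neg_right).isNilpotent_add hnn (hN.neg)
  have := Module.End.eq_zero_of_isNilpotent_isSemisimple hnil hsemi
  rw [sub_eq_zero] at this
  exact this

/-- Uniqueness of the multiplicative Jordan–Chevalley decomposition of an
invertible endomorphism of a finite-dimensional complex vector space. -/
theorem jordan_chevalley_unique {V : Type*} [AddCommGroup V] [Module ℂ V]
    [FiniteDimensional ℂ V] (A : Module.End ℂ V) (hA : IsUnit A)
    (S U S' U' : Module.End ℂ V)
    (h1 : A = S * U) (h2 : A = U * S)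
    (hS : IsSemisimpleEnd S) (hU : IsNilpotent (U - 1))
    (h1' : A = S' * U') (h2' : A = U' * S')
    (hS' : IsSemisimpleEnd S') (hU' : IsNilpotent (U' - 1)) :
    S = S' ∧ U = U' := by
  rw [isSemisimpleEnd_iff] at hS hS'
  -- additive decompositions
  have hcomm : Commute S U := by rw [Commute, SemiconjBy, ← h1, ← h2]
  have hcomm' : Commute S' U' := by rw [Commute, SemiconjBy, ← h1', ← h2']
  set N : Module.End ℂ V := S * (U - 1) with hNdef
  set N' : Module.End ℂ V := S' * (U' - 1) with hN'def
  have hSNc : Commute S N := (Commute.refl S).mul_right (hcomm.sub_right (Commute.one_right S))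
  have hSNc' : Commute S' N' :=
    (Commute.refl S').mul_right (hcomm'.sub_right (Commute.one_right S'))
  have hNnil : IsNilpotent N :=
    (hcomm.sub_right (Commute.one_right S)).isNilpotent_mul_left hU
  have hNnil' : IsNilpotent N' :=
    (hcomm'.sub_right (Commute.one_right S')).isNilpotent_mul_left hU'
  have hAdd : A = S + N := by rw [h1, hNdef, mul_sub, mul_one, add_sub_cancel]
  have hAdd' : A = S' + N' := by rw [h1', hN'def, mul_sub, mul_one, add_sub_cancel]
  -- canonical decomposition
  obtain ⟨n, hn, s, hs, hnn, hss, hns⟩ :=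
    Module.End.exists_isNilpotent_isSemisimple (f := A) (K := ℂ)
  have e1 : S = s := additive_unique A S N hSNc hS hNnil hAdd s hs n hn hss hnn hns
  have e2 : S' = s := additive_unique A S' N' hSNc' hS' hNnil' hAdd' s hs n hn hss hnn hns
  have hSS : S = S' := e1.trans e2.symm
  refine ⟨hSS, ?_⟩
  -- cancel S to get U = U'
  have hUunit : IsUnit U := by
    have := hU.isUnit_one_add
    simpa using this
  have hSunit : IsUnit S := by
    have hAu : IsUnit (S * U) := h1 ▸ hA
    have : S = (S * U) * ↑hUunit.unit⁻¹ := by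
      rw [mul_assoc, hUunit.mul_val_inv, mul_one]
    rw [this]
    exact hAu.mul hUunit.unit⁻¹.isUnit
  have : S * U = S * U' := by rw [← h1, hSS, ← h1']
  exact hSunit.mul_left_cancel this
end

section
/- Let A be an invertible n×n complex matrix with multiplicative Jordan–Chevalley decomposition A = S·U = U·S, where S is semisimple (diagonalizable) and U is unipotent. Then S lies in the topological closure of the conjugation orbit {g·A·g⁻¹ : g ∈ GL(n,ℂ)} of A in the space of n×n complex matrices. (Used in Step 4 of the proof of the main theorem to show the diagonal Hopf manifold is an arbitrarily small deformation of the original Hopf manifold.) -/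
open Matrix Polynomial Filter Submodule Set

variable {n : ℕ}

private lemma aux_det_one_sub_nilpotent {N : Matrix (Fin n) (Fin n) ℂ}
    (hN : IsNilpotent N) : (1 - N).det = 1 := by
  obtain ⟨r, hr, hC⟩ := Polynomial.isUnit_iff.mp (Matrix.isUnit_charpolyRev_of_isNilpotent hN)
  have key : ∀ x : ℂ, (1 - x • N).det = (N.charpolyRev).eval x := by
    intro x
    rw [Matrix.charpolyRev, ← Polynomial.coe_evalRingHom, RingHom.map_det]
    congr 1
    ext i j
    simp only [RingHom.mapMatrix_apply, Matrix.map_apply, Matrix.sub_apply, Matrix.one_apply, Matrix.smul_apply,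
      Matrix.map_apply, smul_eq_mul, coe_evalRingHom, eval_sub, eval_one, eval_mul, eval_X,
      eval_C, apply_ite (eval x), eval_one, eval_zero]
  have h0 : r = 1 := by
    have := Matrix.eval_charpolyRev (M := N)
    rw [← hC] at this
    simpa using this
  have h1 := key 1
  rw [← hC, h0] at h1
  simpa using h1

private lemma aux_eval_charpoly (M : Matrix (Fin n) (Fin n) ℂ) (x : ℂ) :
    M.charpoly.eval x = (x • (1 : Matrix (Fin n) (Fin n) ℂ) - M).det := by
  rw [Matrix.charpoly, ← Polynomial.coe_evalRingHom, RingHom.map_det]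
  congr 1
  ext i j
  by_cases h : i = j
  · subst h
    simp [Matrix.charmatrix_apply_eq, Matrix.one_apply, Matrix.smul_apply, smul_eq_mul]
  · simp [Matrix.charmatrix_apply_ne _ _ _ h, Matrix.one_apply, h, Matrix.smul_apply,
      smul_eq_mul]

private lemma aux_charpoly_add_nilpotent (M N : Matrix (Fin n) (Fin n) ℂ)
    (hc : M * N = N * M) (hN : IsNilpotent N) : (M + N).charpoly = M.charpoly := by
  apply Polynomial.eq_of_infinite_eval_eq
  have hsub : {x : ℂ | ¬ M.charpoly.IsRoot x} ⊆ {x | eval x (M + N).charpoly = eval x M.charpoly} := by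
    intro x hx
    have hdet : M.charpoly.eval x ≠ 0 := hx
    rw [aux_eval_charpoly] at hdet
    set W : Matrix (Fin n) (Fin n) ℂ := x • (1 : Matrix (Fin n) (Fin n) ℂ) - M with hW
    have hWu : IsUnit W.det := isUnit_iff_ne_zero.mpr hdet
    have hWN : W * N = N * W := by
      simp only [hW, Matrix.sub_mul, Matrix.mul_sub, Matrix.smul_mul, Matrix.mul_smul,
        one_mul, mul_one, hc]
    have hWiN : W⁻¹ * N = N * W⁻¹ := by
      have h1 := Matrix.nonsing_inv_mul W hWu
      have h2 := Matrix.mul_nonsing_inv W hWu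
      calc W⁻¹ * N = W⁻¹ * N * (W * W⁻¹) := by rw [h2, mul_one]
        _ = W⁻¹ * (N * W) * W⁻¹ := by noncomm_ring
        _ = W⁻¹ * (W * N) * W⁻¹ := by rw [hWN]
        _ = N * W⁻¹ := by rw [← mul_assoc, mul_assoc W⁻¹ W N, ← mul_assoc W⁻¹ W, h1, one_mul]
    have hnil : IsNilpotent (W⁻¹ * N) := Commute.isNilpotent_mul_left (hWiN : Commute _ _) hN
    have hfac : x • (1 : Matrix (Fin n) (Fin n) ℂ) - (M + N) = W * (1 - W⁻¹ * N) := by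
      rw [Matrix.mul_sub, mul_one, ← mul_assoc, Matrix.mul_nonsing_inv W hWu, one_mul, hW]
      abel
    show eval x (M + N).charpoly = eval x M.charpoly
    rw [aux_eval_charpoly, aux_eval_charpoly, hfac, Matrix.det_mul,
      aux_det_one_sub_nilpotent hnil, mul_one]
  refine Set.Infinite.mono hsub ?_
  exact Set.Finite.infinite_compl (Polynomial.finite_setOf_isRoot (M.charpoly_monic).ne_zero)

private lemma aux_charpoly_conj (g : (Matrix (Fin n) (Fin n) ℂ)ˣ) (M : Matrix (Fin n) (Fin n) ℂ) :
    ((g : Matrix (Fin n) (Fin n) ℂ) * M *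
      ((g⁻¹ : (Matrix (Fin n) (Fin n) ℂ)ˣ) : Matrix (Fin n) (Fin n) ℂ)).charpoly = M.charpoly := by
  apply Polynomial.funext
  intro x
  rw [aux_eval_charpoly, aux_eval_charpoly]
  have hgg : (g : Matrix (Fin n) (Fin n) ℂ) * (g⁻¹ : (Matrix (Fin n) (Fin n) ℂ)ˣ) = 1 := by
    rw [← Units.val_mul, mul_inv_cancel, Units.val_one]
  have hfac : x • (1 : Matrix (Fin n) (Fin n) ℂ) - (g : Matrix (Fin n) (Fin n) ℂ) * M * (g⁻¹ : (Matrix (Fin n) (Fin n) ℂ)ˣ)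
      = (g : Matrix (Fin n) (Fin n) ℂ) * (x • 1 - M) * ((g⁻¹ : (Matrix (Fin n) (Fin n) ℂ)ˣ) : Matrix (Fin n) (Fin n) ℂ) := by
    rw [Matrix.mul_sub, Matrix.sub_mul, Matrix.mul_smul, mul_one, Matrix.smul_mul, hgg]
  rw [hfac, Matrix.det_mul, Matrix.det_mul]
  have : Matrix.det (g : Matrix (Fin n) (Fin n) ℂ) * Matrix.det ((g⁻¹ : (Matrix (Fin n) (Fin n) ℂ)ˣ) : Matrix (Fin n) (Fin n) ℂ) = 1 := by
    rw [← Matrix.det_mul, hgg, Matrix.det_one]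
  calc Matrix.det (g : Matrix (Fin n) (Fin n) ℂ) * (x • 1 - M).det * Matrix.det ((g⁻¹ : (Matrix (Fin n) (Fin n) ℂ)ˣ) : Matrix (Fin n) (Fin n) ℂ)
      = (x • 1 - M).det * (Matrix.det (g : Matrix (Fin n) (Fin n) ℂ) * Matrix.det ((g⁻¹ : (Matrix (Fin n) (Fin n) ℂ)ˣ) : Matrix (Fin n) (Fin n) ℂ)) := by ring
    _ = (x • 1 - M).det := by rw [this, mul_one]

private lemma aux_charpoly_diagonal (v : Fin n → ℂ) :
    (Matrix.diagonal v).charpoly = ∏ i, (X - C (v i)) := by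
  rw [Matrix.charpoly_of_upperTriangular _ (Matrix.blockTriangular_diagonal v)]
  simp

private lemma aux_exists_perm (c d : Fin n → ℂ)
    (h : ∏ i, (X - C (c i)) = ∏ i, (X - C (d i))) :
    ∃ σ : Equiv.Perm (Fin n), ∀ i, d (σ i) = c i := by
  classical
  have hm : Multiset.map c Finset.univ.val = Multiset.map d Finset.univ.val := by
    have hprod : ∀ f : Fin n → ℂ,
        ((Multiset.map f Finset.univ.val).map fun a => X - C a).prod = ∏ i, (X - C (f i)) := by
      intro f
      rw [Multiset.map_map, ← Finset.prod_eq_multiset_prod]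
      rfl
    rw [← Polynomial.roots_multiset_prod_X_sub_C (Multiset.map c Finset.univ.val),
      ← Polynomial.roots_multiset_prod_X_sub_C (Multiset.map d Finset.univ.val),
      hprod, hprod, h]
  have hcard : ∀ γ : ℂ, Fintype.card {i // c i = γ} = Fintype.card {i // d i = γ} := by
    intro γ
    have hc := Multiset.count_map (f := c) (s := Finset.univ.val) (b := γ)
    have hd := Multiset.count_map (f := d) (s := Finset.univ.val) (b := γ)
    rw [hm] at hc
    rw [Fintype.card_subtype, Fintype.card_subtype]
    have : ∀ (f : Fin n → ℂ), (Finset.univ.filter fun i => f i = γ).card =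
        Multiset.card (Multiset.filter (fun i => γ = f i) Finset.univ.val) := by
      intro f
      have h1 : Finset.univ.filter (fun i => f i = γ) = Finset.univ.filter (fun i => γ = f i) :=
        Finset.filter_congr (fun i _ => eq_comm)
      rw [h1, ← Finset.filter_val]
      rfl
    rw [this c, this d, ← hc, hd]
  let e : ∀ γ : ℂ, {i // c i = γ} ≃ {i // d i = γ} := fun γ => Fintype.equivOfCardEq (hcard γ)
  refine ⟨((Equiv.sigmaFiberEquiv c).symm.trans
    ((Equiv.sigmaCongrRight e).trans (Equiv.sigmaFiberEquiv d))), fun i => ?_⟩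
  simp only [Equiv.trans_apply, Equiv.sigmaFiberEquiv, Equiv.sigmaCongrRight,
    Equiv.coe_fn_symm_mk, Equiv.coe_fn_mk]
  exact (e (c i) ⟨i, rfl⟩).2

private lemma aux_diag_perm (dv : Fin n → ℂ) (σ : Equiv.Perm (Fin n)) :
    ∃ q : (Matrix (Fin n) (Fin n) ℂ)ˣ,
      Matrix.diagonal (fun i => dv (σ i)) =
        (q : Matrix (Fin n) (Fin n) ℂ) * Matrix.diagonal dv *
          ((q⁻¹ : (Matrix (Fin n) (Fin n) ℂ)ˣ) : Matrix (Fin n) (Fin n) ℂ) := by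
  classical
  set Q : Matrix (Fin n) (Fin n) ℂ := σ.toPEquiv.toMatrix with hQ
  set Q' : Matrix (Fin n) (Fin n) ℂ := σ.symm.toPEquiv.toMatrix with hQ'
  have h1 : Q * Q' = 1 := by
    rw [hQ, hQ', ← PEquiv.toMatrix_trans, ← Equiv.toPEquiv_trans]
    simp
  have h2 : Q' * Q = 1 := by
    rw [hQ, hQ', ← PEquiv.toMatrix_trans, ← Equiv.toPEquiv_trans]
    simp
  refine ⟨⟨Q, Q', h1, h2⟩, ?_⟩
  show Matrix.diagonal (fun i => dv (σ i)) = Q * Matrix.diagonal dv * Q'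
  rw [hQ, hQ', PEquiv.toMatrix_toPEquiv_mul, PEquiv.mul_toMatrix_toPEquiv]
  ext i j
  simp only [Matrix.submatrix_apply, id_eq, Equiv.symm_symm, Matrix.diagonal_apply]
  by_cases hij : i = j
  · simp [hij]
  · have : ¬ σ i = σ j := fun hc => hij (σ.injective hc)
    simp [hij, this]

private lemma aux_conj_closure {O : Set (Matrix (Fin n) (Fin n) ℂ)}
    (hO : ∀ (g : (Matrix (Fin n) (Fin n) ℂ)ˣ) (X : Matrix (Fin n) (Fin n) ℂ), X ∈ O →
      (g : Matrix (Fin n) (Fin n) ℂ) * X * ((g⁻¹ : (Matrix (Fin n) (Fin n) ℂ)ˣ) : Matrix (Fin n) (Fin n) ℂ) ∈ O)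
    (g : (Matrix (Fin n) (Fin n) ℂ)ˣ) (X : Matrix (Fin n) (Fin n) ℂ) (hX : X ∈ closure O) :
    (g : Matrix (Fin n) (Fin n) ℂ) * X * ((g⁻¹ : (Matrix (Fin n) (Fin n) ℂ)ˣ) : Matrix (Fin n) (Fin n) ℂ) ∈ closure O := by
  have hc : Continuous (fun Y : Matrix (Fin n) (Fin n) ℂ =>
      (g : Matrix (Fin n) (Fin n) ℂ) * Y * ((g⁻¹ : (Matrix (Fin n) (Fin n) ℂ)ˣ) : Matrix (Fin n) (Fin n) ℂ)) :=
    (continuous_const.mul continuous_id).mul continuous_const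
  have h1 : (g : Matrix (Fin n) (Fin n) ℂ) * X * ((g⁻¹ : (Matrix (Fin n) (Fin n) ℂ)ˣ) : Matrix (Fin n) (Fin n) ℂ)
      ∈ closure ((fun Y => (g : Matrix (Fin n) (Fin n) ℂ) * Y * ((g⁻¹ : (Matrix (Fin n) (Fin n) ℂ)ˣ) : Matrix (Fin n) (Fin n) ℂ)) '' O) :=
    image_closure_subset_closure_image hc ⟨X, hX, rfl⟩
  refine closure_mono ?_ h1
  rintro _ ⟨Y, hY, rfl⟩
  exact hO g Y hY

private lemma aux_conj_pow (g : (Matrix (Fin n) (Fin n) ℂ)ˣ) (X : Matrix (Fin n) (Fin n) ℂ) (k : ℕ) :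
    ((g : Matrix (Fin n) (Fin n) ℂ) * X * ((g⁻¹ : (Matrix (Fin n) (Fin n) ℂ)ˣ) : Matrix (Fin n) (Fin n) ℂ)) ^ k
      = (g : Matrix (Fin n) (Fin n) ℂ) * X ^ k * ((g⁻¹ : (Matrix (Fin n) (Fin n) ℂ)ˣ) : Matrix (Fin n) (Fin n) ℂ) := by
  induction k with
  | zero => rw [pow_zero, pow_zero, mul_one, ← Units.val_mul, mul_inv_cancel, Units.val_one]
  | succ k ih =>
    rw [pow_succ, pow_succ, ih]
    calc (g : Matrix (Fin n) (Fin n) ℂ) * X ^ k * ((g⁻¹ : (Matrix (Fin n) (Fin n) ℂ)ˣ) : Matrix (Fin n) (Fin n) ℂ) *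
          ((g : Matrix (Fin n) (Fin n) ℂ) * X * ((g⁻¹ : (Matrix (Fin n) (Fin n) ℂ)ˣ) : Matrix (Fin n) (Fin n) ℂ))
        = (g : Matrix (Fin n) (Fin n) ℂ) * X ^ k * (((g⁻¹ : (Matrix (Fin n) (Fin n) ℂ)ˣ) : Matrix (Fin n) (Fin n) ℂ) *
          (g : Matrix (Fin n) (Fin n) ℂ)) * X * ((g⁻¹ : (Matrix (Fin n) (Fin n) ℂ)ˣ) : Matrix (Fin n) (Fin n) ℂ) := by
          noncomm_ring
      _ = (g : Matrix (Fin n) (Fin n) ℂ) * (X ^ k * X) * ((g⁻¹ : (Matrix (Fin n) (Fin n) ℂ)ˣ) : Matrix (Fin n) (Fin n) ℂ) := by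
          rw [← Units.val_mul, inv_mul_cancel, Units.val_one, mul_one]
          noncomm_ring
open scoped Topology

private lemma aux_closure_diag (d' : Fin n → ℂ) (K : Matrix (Fin n) (Fin n) ℂ) (w : Fin n → ℕ)
    (hK : ∀ i j, K i j ≠ 0 → w i < w j) :
    Matrix.diagonal d' ∈ closure {B : Matrix (Fin n) (Fin n) ℂ |
      ∃ g : (Matrix (Fin n) (Fin n) ℂ)ˣ,
        B = (g : Matrix (Fin n) (Fin n) ℂ) * (Matrix.diagonal d' + K) *
          ((g⁻¹ : (Matrix (Fin n) (Fin n) ℂ)ˣ) : Matrix (Fin n) (Fin n) ℂ)} := by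
  classical
  set F : ℂ → Matrix (Fin n) (Fin n) ℂ :=
    fun t => Matrix.diagonal d' + Matrix.of (fun i j => t ^ (w j - w i) * K i j) with hF
  have hKdiag : ∀ i, K i i = 0 := by
    intro i
    by_contra hne
    exact absurd (hK i i hne) (lt_irrefl _)
  have hcont : Continuous F := by
    apply continuous_matrix
    intro i j
    simp only [hF, Matrix.add_apply, Matrix.of_apply]
    exact continuous_const.add ((continuous_pow _).mul continuous_const)
  have hF0 : F 0 = Matrix.diagonal d' := by
    ext i j
    by_cases hij : K i j = 0
    · simp [hF, hij]
    · have hw := hK i j hij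
      simp [hF, zero_pow (by omega : w j - w i ≠ 0), Matrix.add_apply]
  have hmem : ∀ t : ℂ, t ≠ 0 → F t ∈ {B : Matrix (Fin n) (Fin n) ℂ |
      ∃ g : (Matrix (Fin n) (Fin n) ℂ)ˣ,
        B = (g : Matrix (Fin n) (Fin n) ℂ) * (Matrix.diagonal d' + K) *
          ((g⁻¹ : (Matrix (Fin n) (Fin n) ℂ)ˣ) : Matrix (Fin n) (Fin n) ℂ)} := by
    intro t ht
    have hpow : ∀ i : Fin n, (t ^ (w i) : ℂ) ≠ 0 := fun i => pow_ne_zero _ ht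
    refine ⟨⟨Matrix.diagonal (fun i => (t ^ (w i))⁻¹), Matrix.diagonal (fun i => t ^ (w i)),
      by rw [Matrix.diagonal_mul_diagonal,
           show (fun i => (t ^ w i)⁻¹ * t ^ w i) = fun _ => (1:ℂ) from
             funext fun i => inv_mul_cancel₀ (hpow i), Matrix.diagonal_one],
      by rw [Matrix.diagonal_mul_diagonal,
           show (fun i => t ^ w i * (t ^ w i)⁻¹) = fun _ => (1:ℂ) from
             funext fun i => mul_inv_cancel₀ (hpow i), Matrix.diagonal_one]⟩, ?_⟩
    show F t = Matrix.diagonal (fun i => (t ^ (w i))⁻¹) * (Matrix.diagonal d' + K) *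
      Matrix.diagonal (fun i => t ^ (w i))
    ext i j
    rw [Matrix.mul_diagonal, Matrix.diagonal_mul]
    simp only [hF, Matrix.add_apply, Matrix.of_apply, Matrix.diagonal_apply]
    by_cases hij : i = j
    · subst hij
      rw [if_pos rfl]
      field_simp [hKdiag i]
      simp
    · rw [if_neg hij]
      by_cases hK0 : K i j = 0
      · simp [hK0]
      · have hw := hK i j hK0
        rw [pow_sub₀ t ht (le_of_lt hw)]
        ring
  haveI : (𝓝[≠] (0:ℂ)).NeBot := NormedField.nhdsNE_neBot (0 : ℂ)
  have htend : Tendsto F (𝓝[≠] (0:ℂ)) (𝓝 (Matrix.diagonal d')) := by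
    rw [← hF0]
    exact (hcont.tendsto 0).mono_left nhdsWithin_le_nhds
  exact mem_closure_of_tendsto htend (Filter.eventually_of_mem self_mem_nhdsWithin
    (fun t ht => hmem t ht))

private lemma aux_main (d : Fin n → ℂ) (K : Matrix (Fin n) (Fin n) ℂ)
    (hcomm : ∀ i j, K i j ≠ 0 → d i = d j) (hKnil : IsNilpotent K) :
    ∃ (u : (Matrix (Fin n) (Fin n) ℂ)ˣ) (c : Fin n → ℂ) (w : Fin n → ℕ)
      (K' : Matrix (Fin n) (Fin n) ℂ),
      (Matrix.diagonal d + K) * (u : Matrix (Fin n) (Fin n) ℂ) =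
        (u : Matrix (Fin n) (Fin n) ℂ) * (Matrix.diagonal c + K') ∧
      (∀ i j, K' i j ≠ 0 → w i < w j) := by
  classical
  obtain ⟨m, hm⟩ := hKnil
  set Vs : ℕ → Submodule ℂ (Fin n → ℂ) := fun j => LinearMap.ker ((K ^ j).mulVecLin) with hVs
  have hVmem : ∀ (j) (x : Fin n → ℂ), x ∈ Vs j ↔ (K ^ j) *ᵥ x = 0 := by
    intro j x
    simp [hVs, LinearMap.mem_ker, Matrix.mulVecLin_apply]
  have hV0 : Vs 0 = ⊥ := by
    ext x
    simp [hVmem, pow_zero, Matrix.one_mulVec]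
  have hVm : Vs m = ⊤ := by
    ext x
    simp [hVmem, hm, Matrix.zero_mulVec]
  have hVmono : Monotone Vs := by
    apply monotone_nat_of_le_succ
    intro j x hx
    rw [hVmem] at hx ⊢
    rw [pow_succ', ← Matrix.mulVec_mulVec, hx, Matrix.mulVec_zero]
  set E : ℂ → Set (Fin n → ℂ) := fun γ => {x | ∀ i, d i ≠ γ → x i = 0} with hE
  set Pg : ℂ → Matrix (Fin n) (Fin n) ℂ :=
    fun γ => Matrix.diagonal (fun i => if d i = γ then 1 else 0) with hPg
  have hPgK : ∀ (γ) (l : ℕ), Pg γ * K ^ l = K ^ l * Pg γ := by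
    intro γ l
    have h1 : Commute (Pg γ) K := by
      show Pg γ * K = K * Pg γ
      ext i j
      rw [hPg, Matrix.diagonal_mul, Matrix.mul_diagonal]
      by_cases hk : K i j = 0
      · simp [hk]
      · rw [hcomm i j hk, mul_comm]
    exact (h1.pow_right l).eq
  have hPgE : ∀ (γ) (x : Fin n → ℂ), (Pg γ) *ᵥ x ∈ E γ := by
    intro γ x i hi
    rw [hPg, Matrix.mulVec_diagonal, if_neg hi, zero_mul]
  have hPfix : ∀ (γ) (x : Fin n → ℂ), x ∈ E γ → Pg γ *ᵥ x = x := by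
    intro γ x hx
    funext i
    rw [hPg, Matrix.mulVec_diagonal]
    by_cases hi : d i = γ
    · rw [if_pos hi, one_mul]
    · rw [if_neg hi, zero_mul, (hx i hi).symm]
  have hsum : ∀ x : Fin n → ℂ, ∑ γ ∈ Finset.image d Finset.univ, Pg γ *ᵥ x = x := by
    intro x
    funext i
    rw [Finset.sum_apply]
    have : ∀ γ, (Pg γ *ᵥ x) i = if d i = γ then x i else 0 := by
      intro γ
      rw [hPg, Matrix.mulVec_diagonal]
      by_cases hi : d i = γ <;> simp [hi]
    simp only [this]
    rw [Finset.sum_ite_eq]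
    simp [Finset.mem_image]
  -- the inductive construction of an adapted linearly independent spanning set
  have key : ∀ j : ℕ, ∃ s : Set (Fin n → ℂ),
      LinearIndependent ℂ ((↑) : s → (Fin n → ℂ)) ∧
      Submodule.span ℂ s = Vs j ∧
      (∀ x ∈ s, ∃ γ, x ∈ E γ) ∧
      (∀ j' ≤ j, (Vs j' : Set (Fin n → ℂ)) ⊆ (Submodule.span ℂ (s ∩ (Vs j' : Set (Fin n → ℂ))) : Submodule ℂ (Fin n → ℂ))) := by
    intro j
    induction j with
    | zero =>
      refine ⟨∅, linearIndependent_empty ℂ _, by simp [hV0], by simp, ?_⟩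
      intro j' hj'
      rw [Nat.le_zero.mp hj', hV0]
      intro x hx
      have : x = 0 := hx
      simp [this]
    | succ j ih =>
      obtain ⟨s, hli, hsp, hγ, hlow⟩ := ih
      set T : Set (Fin n → ℂ) := {x | x ∈ Vs (j+1) ∧ ∃ γ, x ∈ E γ} with hT
      have hsT : s ⊆ T := by
        intro x hx
        refine ⟨hVmono (Nat.le_succ j) ?_, hγ x hx⟩
        rw [← hsp]
        exact subset_span hx
      obtain ⟨b, hbT, hsb, hTb, hbli⟩ := exists_linearIndepOn_id_extension hli hsT
      have hTV : T ⊆ (Vs (j+1) : Set (Fin n → ℂ)) := fun x hx => hx.1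
      have hVspanT : (Vs (j+1) : Set (Fin n → ℂ)) ⊆ (Submodule.span ℂ T : Submodule ℂ (Fin n → ℂ)) := by
        intro x hx
        rw [show x = ∑ γ ∈ Finset.image d Finset.univ, Pg γ *ᵥ x from (hsum x).symm]
        apply Submodule.sum_mem
        intro γ _
        apply subset_span
        refine ⟨?_, γ, hPgE γ x⟩
        rw [hVmem]
        rw [Matrix.mulVec_mulVec, ← hPgK, ← Matrix.mulVec_mulVec, (hVmem _ x).mp hx,
          Matrix.mulVec_zero]
      have hspanb : Submodule.span ℂ b = Vs (j+1) := by
        apply le_antisymm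
        · rw [Submodule.span_le]
          exact hbT.trans hTV
        · intro x hx
          exact Submodule.span_le.mpr hTb (hVspanT hx)
      refine ⟨b, hbli, hspanb, fun x hx => (hbT hx).2, ?_⟩
      intro j' hj'
      by_cases hcase : j' = j + 1
      · subst hcase
        have hbsub : b ⊆ (Vs (j+1) : Set (Fin n → ℂ)) := by
          rw [← hspanb]
          exact subset_span
        rw [inter_eq_self_of_subset_left hbsub, hspanb]
      · have h1 := hlow j' (by omega)
        refine h1.trans ?_
        have : (s ∩ (Vs j' : Set (Fin n → ℂ))) ⊆ (b ∩ (Vs j' : Set (Fin n → ℂ))) :=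
          inter_subset_inter_left _ hsb
        exact Submodule.span_mono this
  obtain ⟨s, hli, hsp, hγ, hlow⟩ := key m
  have hfin : s.Finite := hli.setFinite
  haveI := hfin.fintype
  have hspan_top : ⊤ ≤ Submodule.span ℂ (Set.range ((↑) : s → (Fin n → ℂ))) := by
    rw [Subtype.range_coe, hsp, hVm]
  set b0 : Module.Basis s ℂ (Fin n → ℂ) := Module.Basis.mk hli hspan_top with hb0
  have hcard : Fintype.card (Fin n) = Fintype.card s := by
    have h := Module.finrank_eq_card_basis b0
    rw [Module.finrank_fin_fun] at h
    rw [Fintype.card_fin, ← h]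
  set e : Fin n ≃ s := Fintype.equivOfCardEq hcard with he
  set b' : Module.Basis (Fin n) ℂ (Fin n → ℂ) := b0.reindex e.symm with hb'
  have hb'apply : ∀ i, b' i = ((e i : s) : Fin n → ℂ) := by
    intro i
    rw [hb', Module.Basis.reindex_apply, Equiv.symm_symm, hb0, Module.Basis.mk_apply]
  have hb'mem : ∀ i, b' i ∈ s := by
    intro i
    rw [hb'apply]
    exact (e i).2
  set c : Fin n → ℂ := fun i => Classical.choose (hγ _ (hb'mem i)) with hc
  have hcspec : ∀ i, b' i ∈ E (c i) := fun i => Classical.choose_spec (hγ _ (hb'mem i))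
  have hwex : ∀ x : Fin n → ℂ, ∃ j, x ∈ Vs j := fun x => ⟨m, by rw [hVm]; trivial⟩
  set w : Fin n → ℕ := fun i => Nat.find (hwex (b' i)) with hw
  have hw1 : ∀ i, b' i ∈ Vs (w i) := fun i => Nat.find_spec (hwex (b' i))
  have hwle : ∀ (i) (j : ℕ), b' i ∈ Vs j → w i ≤ j := fun i j hj => Nat.find_min' (hwex (b' i)) hj
  have hw0 : ∀ i, w i ≠ 0 := by
    intro i h0
    have := hw1 i
    rw [h0, hV0] at this
    exact b'.ne_zero i (by simpa using this)
  have hwm : ∀ i, w i ≤ m := fun i => hwle i m (by rw [hVm]; trivial)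
  -- support of coordinates of elements of span (s ∩ Vs q)
  have hrepr : ∀ (q : ℕ) (y : Fin n → ℂ),
      y ∈ Submodule.span ℂ (s ∩ (Vs q : Set (Fin n → ℂ))) → ∀ i, ¬ (w i ≤ q) → b'.repr y i = 0 := by
    intro q y hy i hi
    induction hy using Submodule.span_induction with
    | mem z hz =>
      set i₀ : Fin n := e.symm ⟨z, hz.1⟩ with hi₀
      have hzb : z = b' i₀ := by
        rw [hb'apply, hi₀, Equiv.apply_symm_apply]
      have hwi₀ : w i₀ ≤ q := by
        apply hwle
        rw [← hzb]
        exact hz.2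
      have hne : i ≠ i₀ := fun hii => hi (hii ▸ hwi₀)
      rw [hzb, Module.Basis.repr_self, Finsupp.single_apply, if_neg (fun hii => hne hii.symm)]
    | zero => simp
    | add x y hx hy ihx ihy => rw [map_add, Finsupp.add_apply, ihx, ihy, add_zero]
    | smul a x hx ihx => rw [_root_.map_smul, Finsupp.smul_apply, ihx, smul_zero]
  set K' : Matrix (Fin n) (Fin n) ℂ := LinearMap.toMatrix b' b' ((K).mulVecLin) with hK'
  have hK'supp : ∀ i j, K' i j ≠ 0 → w i < w j := by
    intro i j hne
    by_contra hlt
    apply hne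
    rw [hK', LinearMap.toMatrix_apply, Matrix.mulVecLin_apply]
    have hyV : K *ᵥ b' j ∈ Vs (w j - 1) := by
      rw [hVmem, Matrix.mulVec_mulVec, ← pow_succ,
        show w j - 1 + 1 = w j from by have := hw0 j; omega, ← hVmem]
      exact hw1 j
    have hyspan : K *ᵥ b' j ∈
        Submodule.span ℂ (s ∩ (Vs (w j - 1) : Set (Fin n → ℂ))) :=
      hlow (w j - 1) (by have := hwm j; omega) hyV
    exact hrepr (w j - 1) _ hyspan i (by have := hw0 j; omega)
  have hdiagmat : LinearMap.toMatrix b' b' ((Matrix.diagonal d).mulVecLin) = Matrix.diagonal c := by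
    ext i j
    rw [LinearMap.toMatrix_apply, Matrix.mulVecLin_apply]
    have hDb : Matrix.diagonal d *ᵥ b' j = c j • b' j := by
      funext k
      rw [Matrix.mulVec_diagonal]
      by_cases hk : d k = c j
      · rw [hk]; rfl
      · have hz := hcspec j k hk
        simp [Pi.smul_apply, hz]
    rw [hDb, _root_.map_smul, Finsupp.smul_apply, Module.Basis.repr_self, Finsupp.single_apply,
      smul_eq_mul]
    by_cases hij : i = j
    · subst hij
      simp [Matrix.diagonal_apply_eq]
    · rw [Matrix.diagonal_apply_ne _ hij, if_neg (fun hh => hij hh.symm), mul_zero]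
  -- the change of basis matrix
  set eb : Module.Basis (Fin n) ℂ (Fin n → ℂ) := Pi.basisFun ℂ (Fin n) with heb
  haveI : Invertible (eb.toMatrix ⇑b') := eb.invertibleToMatrix b'
  set u : (Matrix (Fin n) (Fin n) ℂ)ˣ := unitOfInvertible (eb.toMatrix ⇑b') with hu
  have hAu : (Matrix.diagonal d + K) * (u : Matrix (Fin n) (Fin n) ℂ) =
      (u : Matrix (Fin n) (Fin n) ℂ) * (Matrix.diagonal c + K') := by
    have h1 : LinearMap.toMatrix eb eb ((Matrix.diagonal d + K).mulVecLin) = Matrix.diagonal d + K := by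
      rw [heb, LinearMap.toMatrix_eq_toMatrix', ← Matrix.toLin'_apply', LinearMap.toMatrix'_toLin']
    have h2 : LinearMap.toMatrix b' b' ((Matrix.diagonal d + K).mulVecLin) = Matrix.diagonal c + K' := by
      rw [Matrix.mulVecLin_add, map_add, hdiagmat, hK']
    have h3 := LinearMap.toMatrix_comp b' eb eb ((Matrix.diagonal d + K).mulVecLin) LinearMap.id
    have h4 := LinearMap.toMatrix_comp b' b' eb LinearMap.id ((Matrix.diagonal d + K).mulVecLin)
    rw [LinearMap.comp_id] at h3
    rw [LinearMap.id_comp] at h4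
    rw [LinearMap.toMatrix_id_eq_basis_toMatrix] at h3 h4
    rw [show (u : Matrix (Fin n) (Fin n) ℂ) = eb.toMatrix ⇑b' from rfl, ← h1, ← h2, ← h3, ← h4]
  exact ⟨u, c, w, K', hAu, hK'supp⟩

open Matrix Polynomial

variable {n : ℕ}

private lemma aux_conj_mul (g : (Matrix (Fin n) (Fin n) ℂ)ˣ) (X Y : Matrix (Fin n) (Fin n) ℂ) :
    ((g : Matrix (Fin n) (Fin n) ℂ) * X * ((g⁻¹ : (Matrix (Fin n) (Fin n) ℂ)ˣ) : Matrix (Fin n) (Fin n) ℂ)) *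
      ((g : Matrix (Fin n) (Fin n) ℂ) * Y * ((g⁻¹ : (Matrix (Fin n) (Fin n) ℂ)ˣ) : Matrix (Fin n) (Fin n) ℂ)) =
    (g : Matrix (Fin n) (Fin n) ℂ) * (X * Y) * ((g⁻¹ : (Matrix (Fin n) (Fin n) ℂ)ˣ) : Matrix (Fin n) (Fin n) ℂ) := by
  simp only [mul_assoc, Units.inv_mul_cancel_left]

private lemma aux_conj_comp (g h : (Matrix (Fin n) (Fin n) ℂ)ˣ) (X : Matrix (Fin n) (Fin n) ℂ) :
    (g : Matrix (Fin n) (Fin n) ℂ) *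
      ((h : Matrix (Fin n) (Fin n) ℂ) * X * ((h⁻¹ : (Matrix (Fin n) (Fin n) ℂ)ˣ) : Matrix (Fin n) (Fin n) ℂ)) *
      ((g⁻¹ : (Matrix (Fin n) (Fin n) ℂ)ˣ) : Matrix (Fin n) (Fin n) ℂ) =
    ((g * h : (Matrix (Fin n) (Fin n) ℂ)ˣ) : Matrix (Fin n) (Fin n) ℂ) * X *
      (((g * h)⁻¹ : (Matrix (Fin n) (Fin n) ℂ)ˣ) : Matrix (Fin n) (Fin n) ℂ) := by
  simp only [Units.val_mul, _root_.mul_inv_rev, Units.val_mul, mul_assoc]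

private lemma aux_conj_solve {g : (Matrix (Fin n) (Fin n) ℂ)ˣ} {X Y : Matrix (Fin n) (Fin n) ℂ}
    (hY : Y = (g : Matrix (Fin n) (Fin n) ℂ) * X * ((g⁻¹ : (Matrix (Fin n) (Fin n) ℂ)ˣ) : Matrix (Fin n) (Fin n) ℂ)) :
    X = ((g⁻¹ : (Matrix (Fin n) (Fin n) ℂ)ˣ) : Matrix (Fin n) (Fin n) ℂ) * Y *
      (((g⁻¹)⁻¹ : (Matrix (Fin n) (Fin n) ℂ)ˣ) : Matrix (Fin n) (Fin n) ℂ) := by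
  rw [hY, aux_conj_comp g⁻¹ g X, inv_mul_cancel]
  simp



/-- The semisimple part `S` of the multiplicative Jordan–Chevalley
decomposition `A = S * U = U * S` of an invertible complex matrix `A` lies in
the closure of the conjugation orbit `{g * A * g⁻¹ : g ∈ GL(n, ℂ)}` of `A`. -/
theorem semisimple_part_mem_closure_conjugation_orbit {n : ℕ}
    (A S U : Matrix (Fin n) (Fin n) ℂ) (hA : IsUnit A)
    (h1 : A = S * U) (h2 : A = U * S)
    (hS : ∃ P : (Matrix (Fin n) (Fin n) ℂ)ˣ, ∃ d : Fin n → ℂ,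
      S = (P : Matrix (Fin n) (Fin n) ℂ) * Matrix.diagonal d *
        ((P⁻¹ : (Matrix (Fin n) (Fin n) ℂ)ˣ) : Matrix (Fin n) (Fin n) ℂ))
    (hU : IsNilpotent (U - 1)) :
    S ∈ closure {B : Matrix (Fin n) (Fin n) ℂ |
      ∃ g : (Matrix (Fin n) (Fin n) ℂ)ˣ,
        B = (g : Matrix (Fin n) (Fin n) ℂ) * A *
          ((g⁻¹ : (Matrix (Fin n) (Fin n) ℂ)ˣ) : Matrix (Fin n) (Fin n) ℂ)} := by
  classical
  obtain ⟨P, d, hSP⟩ := hS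
  set N : Matrix (Fin n) (Fin n) ℂ := U - 1 with hN
  have hUeq : U = 1 + N := by rw [hN]; abel
  have hSN : S * N = N * S := by
    have h3 : S * U = U * S := by rw [← h1, ← h2]
    rw [hN, Matrix.mul_sub, Matrix.sub_mul, mul_one, one_mul, h3]
  have hAeq : A = S + S * N := by
    rw [h1, hUeq, Matrix.mul_add, mul_one]
  have hSSN : S * (S * N) = (S * N) * S := by
    rw [hSN, ← mul_assoc, hSN]
  have hSNnil : IsNilpotent (S * N) := by
    obtain ⟨m, hm⟩ := hU
    exact ⟨m, by rw [(show Commute S N from hSN).mul_pow, hm, mul_zero]⟩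
  set Dd : Matrix (Fin n) (Fin n) ℂ := Matrix.diagonal d with hDd
  set K1 : Matrix (Fin n) (Fin n) ℂ :=
    ((P⁻¹ : (Matrix (Fin n) (Fin n) ℂ)ˣ) : Matrix (Fin n) (Fin n) ℂ) * (S * N) *
      (((P⁻¹)⁻¹ : (Matrix (Fin n) (Fin n) ℂ)ˣ) : Matrix (Fin n) (Fin n) ℂ) with hK1
  have hDdconj : Dd = ((P⁻¹ : (Matrix (Fin n) (Fin n) ℂ)ˣ) : Matrix (Fin n) (Fin n) ℂ) * S *
      (((P⁻¹)⁻¹ : (Matrix (Fin n) (Fin n) ℂ)ˣ) : Matrix (Fin n) (Fin n) ℂ) :=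
    aux_conj_solve hSP
  have hK1nil : IsNilpotent K1 := by
    obtain ⟨m, hm⟩ := hSNnil
    exact ⟨m, by rw [hK1, aux_conj_pow, hm, mul_zero, zero_mul]⟩
  have hcommd : ∀ i j, K1 i j ≠ 0 → d i = d j := by
    have hDK : Dd * K1 = K1 * Dd := by
      rw [hDdconj, hK1, aux_conj_mul, aux_conj_mul, hSSN]
    intro i j hne
    have h : (Dd * K1) i j = (K1 * Dd) i j := by rw [hDK]
    rw [hDd, Matrix.diagonal_mul, Matrix.mul_diagonal, mul_comm (K1 i j) (d j)] at h
    exact mul_right_cancel₀ hne h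
  obtain ⟨u, c, w, K', hAu, hK'supp⟩ := aux_main d K1 hcommd hK1nil
  have hA₂ : Matrix.diagonal c + K' =
      ((u⁻¹ : (Matrix (Fin n) (Fin n) ℂ)ˣ) : Matrix (Fin n) (Fin n) ℂ) * (Dd + K1) *
        (((u⁻¹)⁻¹ : (Matrix (Fin n) (Fin n) ℂ)ˣ) : Matrix (Fin n) (Fin n) ℂ) := by
    rw [inv_inv]
    rw [← hDd] at hAu
    calc Matrix.diagonal c + K'
        = ((u⁻¹ : (Matrix (Fin n) (Fin n) ℂ)ˣ) : Matrix (Fin n) (Fin n) ℂ) *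
            ((u : Matrix (Fin n) (Fin n) ℂ) * (Matrix.diagonal c + K')) := by
          rw [Units.inv_mul_cancel_left]
      _ = ((u⁻¹ : (Matrix (Fin n) (Fin n) ℂ)ˣ) : Matrix (Fin n) (Fin n) ℂ) * ((Dd + K1) * (u : Matrix (Fin n) (Fin n) ℂ)) := by
          rw [← hAu]
      _ = ((u⁻¹ : (Matrix (Fin n) (Fin n) ℂ)ˣ) : Matrix (Fin n) (Fin n) ℂ) * (Dd + K1) * (u : Matrix (Fin n) (Fin n) ℂ) := by
          rw [mul_assoc]
  have hAconj : A = (P : Matrix (Fin n) (Fin n) ℂ) * (Dd + K1) *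
      ((P⁻¹ : (Matrix (Fin n) (Fin n) ℂ)ˣ) : Matrix (Fin n) (Fin n) ℂ) := by
    rw [Matrix.mul_add, Matrix.add_mul, ← hSP, hAeq, hK1, aux_conj_comp, mul_inv_cancel]
    simp
  have hDK1conj : Dd + K1 = ((P⁻¹ : (Matrix (Fin n) (Fin n) ℂ)ˣ) : Matrix (Fin n) (Fin n) ℂ) * A *
      (((P⁻¹)⁻¹ : (Matrix (Fin n) (Fin n) ℂ)ˣ) : Matrix (Fin n) (Fin n) ℂ) := aux_conj_solve hAconj
  set g₂ : (Matrix (Fin n) (Fin n) ℂ)ˣ := u⁻¹ * P⁻¹ with hg₂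
  have hA₂conj : Matrix.diagonal c + K' = ((g₂ : (Matrix (Fin n) (Fin n) ℂ)ˣ) : Matrix (Fin n) (Fin n) ℂ) * A *
      ((g₂⁻¹ : (Matrix (Fin n) (Fin n) ℂ)ˣ) : Matrix (Fin n) (Fin n) ℂ) := by
    rw [hA₂, hDK1conj, aux_conj_comp, hg₂]
  have hOrbconj : ∀ (g : (Matrix (Fin n) (Fin n) ℂ)ˣ) (X : Matrix (Fin n) (Fin n) ℂ),
      X ∈ {B : Matrix (Fin n) (Fin n) ℂ | ∃ g : (Matrix (Fin n) (Fin n) ℂ)ˣ,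
        B = (g : Matrix (Fin n) (Fin n) ℂ) * A * ((g⁻¹ : (Matrix (Fin n) (Fin n) ℂ)ˣ) : Matrix (Fin n) (Fin n) ℂ)} →
      (g : Matrix (Fin n) (Fin n) ℂ) * X * ((g⁻¹ : (Matrix (Fin n) (Fin n) ℂ)ˣ) : Matrix (Fin n) (Fin n) ℂ) ∈
      {B : Matrix (Fin n) (Fin n) ℂ | ∃ g : (Matrix (Fin n) (Fin n) ℂ)ˣ,
        B = (g : Matrix (Fin n) (Fin n) ℂ) * A * ((g⁻¹ : (Matrix (Fin n) (Fin n) ℂ)ˣ) : Matrix (Fin n) (Fin n) ℂ)} := by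
    rintro g X ⟨h, rfl⟩
    exact ⟨g * h, (aux_conj_comp g h A)⟩
  have hdiagc : Matrix.diagonal c ∈ closure {B : Matrix (Fin n) (Fin n) ℂ |
      ∃ g : (Matrix (Fin n) (Fin n) ℂ)ˣ,
        B = (g : Matrix (Fin n) (Fin n) ℂ) * A *
          ((g⁻¹ : (Matrix (Fin n) (Fin n) ℂ)ˣ) : Matrix (Fin n) (Fin n) ℂ)} := by
    have h6 := aux_closure_diag c K' w hK'supp
    refine closure_mono ?_ h6
    rintro B ⟨g, rfl⟩
    refine ⟨g * g₂, ?_⟩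
    rw [hA₂conj, aux_conj_comp]
  have hbt1 : (Matrix.diagonal c + K').BlockTriangular w := by
    intro i j hij
    have hij' : i ≠ j := by
      intro hh
      rw [hh] at hij
      exact lt_irrefl _ hij
    have hK'0 : K' i j = 0 := by
      by_contra hne
      have := hK'supp i j hne
      omega
    rw [Matrix.add_apply, Matrix.diagonal_apply_ne _ hij', hK'0, add_zero]
  have hcpA₂ : (Matrix.diagonal c + K').charpoly = (Matrix.diagonal c).charpoly := by
    rw [hbt1.charpoly, (Matrix.blockTriangular_diagonal (b := w) c).charpoly]
    apply Finset.prod_congr rfl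
    intro a _
    congr 1
    ext i j
    simp only [Matrix.toSquareBlock_def, Matrix.add_apply, Matrix.of_apply]
    have hK'0 : K' (i : Fin n) (j : Fin n) = 0 := by
      by_contra hne
      have hlt := hK'supp _ _ hne
      rw [i.2, j.2] at hlt
      exact lt_irrefl _ hlt
    rw [hK'0, add_zero]
  have hchain : (∏ i, (X - C (c i))) = ∏ i, (X - C (d i)) := by
    have e2 : (Matrix.diagonal c + K').charpoly = A.charpoly := by
      rw [hA₂conj]
      exact aux_charpoly_conj g₂ A
    have e3 : A.charpoly = S.charpoly := by
      rw [hAeq]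
      exact aux_charpoly_add_nilpotent S (S * N) hSSN hSNnil
    have e4 : S.charpoly = Dd.charpoly := by
      rw [hSP]
      exact aux_charpoly_conj P Dd
    rw [← aux_charpoly_diagonal c, ← aux_charpoly_diagonal d, ← hcpA₂, e2, e3, ← hDd, e4]
  obtain ⟨σ, hσ⟩ := aux_exists_perm c d hchain
  obtain ⟨q, hq⟩ := aux_diag_perm d σ
  have hdiagceq : Matrix.diagonal c = (q : Matrix (Fin n) (Fin n) ℂ) * Dd *
      ((q⁻¹ : (Matrix (Fin n) (Fin n) ℂ)ˣ) : Matrix (Fin n) (Fin n) ℂ) := by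
    rw [show c = fun i => d (σ i) from funext fun i => (hσ i).symm, hDd]
    exact hq
  have hSfin : S = (((P * q⁻¹ : (Matrix (Fin n) (Fin n) ℂ)ˣ)) : Matrix (Fin n) (Fin n) ℂ) *
      Matrix.diagonal c *
      (((P * q⁻¹)⁻¹ : (Matrix (Fin n) (Fin n) ℂ)ˣ) : Matrix (Fin n) (Fin n) ℂ) := by
    have hDdeq : Dd = ((q⁻¹ : (Matrix (Fin n) (Fin n) ℂ)ˣ) : Matrix (Fin n) (Fin n) ℂ) *
        Matrix.diagonal c * (((q⁻¹)⁻¹ : (Matrix (Fin n) (Fin n) ℂ)ˣ) : Matrix (Fin n) (Fin n) ℂ) :=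
      aux_conj_solve hdiagceq
    rw [hSP, hDdeq, aux_conj_comp]
  rw [hSfin]
  exact aux_conj_closure hOrbconj (P * q⁻¹) _ hdiagc
end
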